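/- Let G be a group with a length function ℓ, and let P be a real polynomial such that for every r ≥ 0 and every nonnegative f ∈ ℂG whose support is contained in B_ℓ(e,r), one has ‖f‖_{*,G} ≤ P(r)·‖f‖₂. Then for every subgroup H of G, the restriction of ℓ to H is a length function on H and for every r ≥ 0 and every nonnegative f ∈ ℂH supported in {h ∈ H : ℓ(h) ≤ r}, one has ‖f‖_{*,H} ≤ P(r)·‖f‖₂; that is, the same polynomial bound holds for H with the induced length. -/

import Mathlib

open scoped BigOperators ComplexOrder

/-- The ℓ²-norm of a finitely supported function `f : G → ℂ`. -/
noncomputable def l2norm {G : Type*} [Group G] (f : MonoidAlgebra ℂ G) : ℝ :=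
  Real.sqrt (∑ γ ∈ f.coeff.support, ‖f.coeff γ‖ ^ 2)

/-- The operator norm of left convolution by `f` on `ℓ²(G)`. -/
noncomputable def opNorm {G : Type*} [Group G] (f : MonoidAlgebra ℂ G) : ℝ :=
  sSup {c : ℝ | ∃ g : MonoidAlgebra ℂ G, l2norm g = 1 ∧ c = l2norm (f * g)}

/-- The weighted ℓ²-norm `‖f‖_{ℓ,s}`. -/
noncomputable def sobolevNorm {G : Type*} [Group G] (ℓ : G → ℝ) (s : ℝ)
    (f : MonoidAlgebra ℂ G) : ℝ :=
  Real.sqrt (∑ γ ∈ f.coeff.support, ‖f.coeff γ‖ ^ 2 * (1 + ℓ γ) ^ (2 * s))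

/-- `ℓ` is a length function on the group `G`. -/
def IsLengthFunction {G : Type*} [Group G] (ℓ : G → ℝ) : Prop :=
  ℓ 1 = 0 ∧ (∀ γ, 0 ≤ ℓ γ) ∧ (∀ γ : G, ℓ γ⁻¹ = ℓ γ) ∧ ∀ γ μ : G, ℓ (γ * μ) ≤ ℓ γ + ℓ μ

/-- `G` has property RD with respect to the length function `ℓ`. -/
def PropertyRD {G : Type*} [Group G] (ℓ : G → ℝ) : Prop :=
  ∃ C s : ℝ, 0 < C ∧ 0 < s ∧ ∀ f : MonoidAlgebra ℂ G, opNorm f ≤ C * sobolevNorm ℓ s f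

section Aux
variable {G : Type*} [Group G]

noncomputable def toEhom (s : Finset G) : MonoidAlgebra ℂ G →+ EuclideanSpace ℂ s where
  toFun f := WithLp.toLp 2 (fun i => f.coeff i.1)
  map_zero' := by ext i; rfl
  map_add' f g := by ext i; exact Finsupp.add_apply f.coeff g.coeff i.1

noncomputable def toE (s : Finset G) (f : MonoidAlgebra ℂ G) : EuclideanSpace ℂ s :=
  toEhom s f

lemma l2norm_eq_sum (f : MonoidAlgebra ℂ G) (s : Finset G) (hs : f.coeff.support ⊆ s) :
    l2norm f = Real.sqrt (∑ γ ∈ s, ‖f.coeff γ‖ ^ 2) := by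
  unfold l2norm
  congr 1
  refine Finset.sum_subset hs ?_
  intro x _ hx
  simp [Finsupp.notMem_support_iff.mp hx]

lemma l2norm_eq_norm (f : MonoidAlgebra ℂ G) (s : Finset G) (hs : f.coeff.support ⊆ s) :
    l2norm f = ‖toE s f‖ := by
  rw [l2norm_eq_sum f s hs, EuclideanSpace.norm_eq (toE s f),
    ← Finset.sum_coe_sort s (fun γ => ‖f.coeff γ‖ ^ 2)]
  rfl

lemma l2norm_nonneg (f : MonoidAlgebra ℂ G) : 0 ≤ l2norm f := Real.sqrt_nonneg _

lemma l2norm_sum_le {ι : Type*} (t : Finset ι) (F : ι → MonoidAlgebra ℂ G) :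
    l2norm (∑ i ∈ t, F i) ≤ ∑ i ∈ t, l2norm (F i) := by
  classical
  set s : Finset G := t.biUnion (fun i => (F i).coeff.support) with hsdef
  have hsub : (∑ i ∈ t, F i).coeff.support ⊆ s := by
    rw [MonoidAlgebra.coeff_sum]; exact Finsupp.support_finset_sum
  rw [l2norm_eq_norm _ s hsub]
  have : toE s (∑ i ∈ t, F i) = ∑ i ∈ t, toE s (F i) := map_sum (toEhom s) F t
  rw [this]
  refine le_trans (norm_sum_le t _) ?_
  refine Finset.sum_le_sum fun i hi => ?_
  rw [l2norm_eq_norm (F i) s (fun x hx => Finset.mem_biUnion.mpr ⟨i, hi, hx⟩)]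

lemma l2norm_single_mul (γ : G) (c : ℂ) (g : MonoidAlgebra ℂ G) :
    l2norm (MonoidAlgebra.single γ c * g) = ‖c‖ * l2norm g := by
  classical
  set s : Finset G := g.coeff.support.map (Equiv.mulLeft γ).toEmbedding with hsdef
  have hsub : (MonoidAlgebra.single γ c * g).coeff.support ⊆ s := by
    intro y hy
    have hy' : c * g.coeff (γ⁻¹ * y) ≠ 0 := by
      rw [← MonoidAlgebra.coeff_single_mul_apply g c γ y]
      exact Finsupp.mem_support_iff.mp hy
    have hg : g.coeff (γ⁻¹ * y) ≠ 0 := fun h => hy' (by simp [h])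
    refine Finset.mem_map.mpr ⟨γ⁻¹ * y, Finsupp.mem_support_iff.mpr hg, ?_⟩
    simp [Equiv.mulLeft]
  rw [l2norm_eq_sum _ s hsub, hsdef, Finset.sum_map]
  have key : ∀ x ∈ g.coeff.support,
      ‖(MonoidAlgebra.single γ c * g).coeff ((Equiv.mulLeft γ).toEmbedding x)‖ ^ 2
        = ‖c‖ ^ 2 * ‖g.coeff x‖ ^ 2 := by
    intro x _
    have hx : (Equiv.mulLeft γ).toEmbedding x = γ * x := rfl
    rw [hx, MonoidAlgebra.coeff_single_mul_apply g c γ (γ * x)]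
    simp [mul_pow, inv_mul_cancel_left]
  rw [Finset.sum_congr rfl key, ← Finset.mul_sum, Real.sqrt_mul (by positivity),
    Real.sqrt_sq (norm_nonneg c)]
  rfl

lemma l2norm_mul_le (f g : MonoidAlgebra ℂ G) :
    l2norm (f * g) ≤ (∑ γ ∈ f.coeff.support, ‖f.coeff γ‖) * l2norm g := by
  classical
  have hf : f = ∑ γ ∈ f.coeff.support, MonoidAlgebra.single γ (f.coeff γ) := by
    conv_lhs => rw [← MonoidAlgebra.sum_coeff_single f]
    rfl
  calc l2norm (f * g) = l2norm (∑ γ ∈ f.coeff.support, MonoidAlgebra.single γ (f.coeff γ) * g) := by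
        rw [← Finset.sum_mul, ← hf]
    _ ≤ ∑ γ ∈ f.coeff.support, l2norm (MonoidAlgebra.single γ (f.coeff γ) * g) := l2norm_sum_le _ _
    _ = ∑ γ ∈ f.coeff.support, ‖f.coeff γ‖ * l2norm g :=
        Finset.sum_congr rfl fun γ _ => l2norm_single_mul γ (f.coeff γ) g
    _ = (∑ γ ∈ f.coeff.support, ‖f.coeff γ‖) * l2norm g := by rw [Finset.sum_mul]

lemma bddAbove_convSet (f : MonoidAlgebra ℂ G) :
    BddAbove {c : ℝ | ∃ g : MonoidAlgebra ℂ G, l2norm g = 1 ∧ c = l2norm (f * g)} := by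
  refine ⟨∑ γ ∈ f.coeff.support, ‖f.coeff γ‖, ?_⟩
  rintro c ⟨g, hg1, rfl⟩
  calc l2norm (f * g) ≤ (∑ γ ∈ f.coeff.support, ‖f.coeff γ‖) * l2norm g := l2norm_mul_le f g
    _ = ∑ γ ∈ f.coeff.support, ‖f.coeff γ‖ := by rw [hg1, mul_one]

lemma l2norm_one : l2norm (MonoidAlgebra.single (1 : G) (1 : ℂ)) = 1 := by
  unfold l2norm
  rw [MonoidAlgebra.coeff_single, Finsupp.support_single_ne_zero _ (one_ne_zero)]
  simp

lemma le_opNorm_of_mem {f : MonoidAlgebra ℂ G} {c : ℝ}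
    (hc : ∃ g : MonoidAlgebra ℂ G, l2norm g = 1 ∧ c = l2norm (f * g)) : c ≤ opNorm f :=
  le_csSup (bddAbove_convSet f) hc

lemma opNorm_nonneg (f : MonoidAlgebra ℂ G) : 0 ≤ opNorm f := by
  refine le_trans (l2norm_nonneg (f * MonoidAlgebra.single (1 : G) (1 : ℂ))) ?_
  exact le_opNorm_of_mem ⟨_, l2norm_one, rfl⟩

lemma coeff_mapDomain_aux {H : Type*} [Group H] (ι : H → G) (f : MonoidAlgebra ℂ H) :
    (MonoidAlgebra.mapDomain ι f).coeff = Finsupp.mapDomain ι f.coeff := rfl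

lemma l2norm_mapDomain {H : Type*} [Group H] {ι : H → G} (hι : Function.Injective ι)
    (f : MonoidAlgebra ℂ H) : l2norm (MonoidAlgebra.mapDomain ι f) = l2norm f := by
  classical
  unfold l2norm
  rw [coeff_mapDomain_aux]
  congr 1
  rw [Finsupp.mapDomain_support_of_injective hι f.coeff, Finset.sum_image
    (fun a _ b _ hab => hι hab)]
  exact Finset.sum_congr rfl fun x _ => by rw [Finsupp.mapDomain_apply hι]

end Aux

/-- If every nonnegative `f ∈ ℂG` supported in `B_ℓ(e,r)` satisfies
`‖f‖_{*,G} ≤ P(r)·‖f‖₂`, then for every subgroup `H ≤ G` the induced length is a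
length function on `H` and every nonnegative `f ∈ ℂH` supported in
`{h ∈ H : ℓ(h) ≤ r}` satisfies `‖f‖_{*,H} ≤ P(r)·‖f‖₂`. -/
theorem rd_passes_to_subgroups {G : Type*} [Group G] (ℓ : G → ℝ)
    (hℓ : IsLengthFunction ℓ) (P : Polynomial ℝ)
    (h : ∀ r : ℝ, 0 ≤ r → ∀ f : MonoidAlgebra ℂ G, (∀ γ : G, 0 ≤ f.coeff γ) →
      (∀ γ : G, f.coeff γ ≠ 0 → ℓ γ ≤ r) → opNorm f ≤ P.eval r * l2norm f) :
    ∀ H : Subgroup G,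
      IsLengthFunction (fun x : H => ℓ (x : G)) ∧
      ∀ r : ℝ, 0 ≤ r → ∀ f : MonoidAlgebra ℂ H, (∀ x : H, 0 ≤ f.coeff x) →
        (∀ x : H, f.coeff x ≠ 0 → ℓ (x : G) ≤ r) → opNorm f ≤ P.eval r * l2norm f := by
  intro H
  obtain ⟨h1, h2, h3, h4⟩ := hℓ
  constructor
  · exact ⟨by simpa using h1, fun x => h2 x, fun x => by simpa using h3 (x : G),
      fun x y => by simpa using h4 (x : G) (y : G)⟩
  intro r hr f hpos hsupp
  classical
  have hinj : Function.Injective (H.subtype : H → G) := Subtype.coe_injective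
  set F : MonoidAlgebra ℂ G := MonoidAlgebra.mapDomain (H.subtype : H → G) f with hFdef
  have hFl2 : l2norm F = l2norm f := l2norm_mapDomain hinj f
  have hFpos : ∀ γ : G, 0 ≤ F.coeff γ := by
    intro γ
    by_cases hγ : γ ∈ Set.range (H.subtype : H → G)
    · obtain ⟨x, rfl⟩ := hγ
      rw [hFdef, coeff_mapDomain_aux, Finsupp.mapDomain_apply hinj]
      exact hpos x
    · rw [hFdef, coeff_mapDomain_aux, Finsupp.mapDomain_of_notMem_range f.coeff γ hγ]
  have hFsupp : ∀ γ : G, F.coeff γ ≠ 0 → ℓ γ ≤ r := by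
    intro γ hγ
    by_cases hmem : γ ∈ Set.range (H.subtype : H → G)
    · obtain ⟨x, rfl⟩ := hmem
      rw [hFdef, coeff_mapDomain_aux, Finsupp.mapDomain_apply hinj] at hγ
      exact hsupp x hγ
    · exact absurd (Finsupp.mapDomain_of_notMem_range f.coeff γ hmem) hγ
  have hF : opNorm F ≤ P.eval r * l2norm F := h r hr F hFpos hFsupp
  have key : ∀ c ∈ {c : ℝ | ∃ g : MonoidAlgebra ℂ H, l2norm g = 1 ∧ c = l2norm (f * g)},
      c ≤ P.eval r * l2norm f := by
    rintro c ⟨g, hg1, rfl⟩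
    set Fg : MonoidAlgebra ℂ G := MonoidAlgebra.mapDomain (H.subtype : H → G) g with hFgdef
    have hmul : MonoidAlgebra.mapDomain (H.subtype : H → G) (f * g) = F * Fg :=
      MonoidAlgebra.mapDomain_mul H.subtype f g
    have h1' : l2norm (f * g) = l2norm (F * Fg) := by
      rw [← hmul, l2norm_mapDomain hinj]
    have hg1' : l2norm Fg = 1 := by
      rw [hFgdef, l2norm_mapDomain hinj, hg1]
    calc l2norm (f * g) ≤ opNorm F := by
          rw [h1']
          exact le_opNorm_of_mem ⟨_, hg1', rfl⟩
      _ ≤ P.eval r * l2norm F := hF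
      _ = P.eval r * l2norm f := by rw [hFl2]
  refine Real.sSup_le key ?_
  calc (0 : ℝ) ≤ opNorm F := opNorm_nonneg F
    _ ≤ P.eval r * l2norm F := hF
    _ = P.eval r * l2norm f := by rw [hFl2]
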